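/- Let A ⋊_α^σ G be a category crossed product with each A_e an integral domain. Then the commutant of A in A ⋊_α^σ G is the set of Σ_{s∈G} a_s u_s with a_s = 0 whenever σ_s is not an identity map (in particular whenever d(s) ≠ c(s)). Consequently, A is maximal commutative in A ⋊_α^σ G if and only if for every nonidentity morphism s of G, the map σ_s is not an identity map. -/

import Mathlib

open CategoryTheory

/-- The type of morphisms of a category `G`, bundled with domain and codomain. -/
abbrev CMor (G : Type*) [Category G] := Σ e f : G, e ⟶ f

/-- Transport along an equality of objects, as a ring homomorphism. -/
def castRH {G : Type*} (A : G → Type*) [∀ e, Ring (A e)]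
    {e f : G} (h : e = f) : A e →+* A f := by subst h; exact RingHom.id _

/-- The carrier of the category crossed product `A ⋊_α^σ G`: finitely supported
formal sums `Σ_s a_s u_s` with `a_s ∈ A_{c(s)}`. -/
abbrev CP {G : Type*} [Category G] (A : G → Type*) [∀ e, Ring (A e)] :=
  Π₀ p : CMor G, A p.2.1

open Classical in
/-- The multiplication of the category crossed product:
`(a u_s)(b u_t) = a σ_s(b) α(s,t) u_{st}` when `d(s) = c(t)`, else `0`. -/
noncomputable def catMul {G : Type*} [Category G] {A : G → Type*} [∀ e, Ring (A e)]
    (σ : ∀ e f : G, (e ⟶ f) → (A e →+* A f))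
    (α : ∀ e f g : G, (f ⟶ g) → (e ⟶ f) → A g)
    (x y : CP A) : CP A :=
  x.sum fun p a => y.sum fun q b =>
    if h : q.2.1 = p.1 then
      DFinsupp.single (⟨q.1, p.2.1, (q.2.2 ≫ eqToHom h) ≫ p.2.2⟩ : CMor G)
        (a * σ p.1 p.2.1 p.2.2 (castRH A h b) * α q.1 p.1 p.2.1 p.2.2 (q.2.2 ≫ eqToHom h))
    else 0

open Classical in
/-- `a u_s`, the formal sum supported on a single morphism. -/
noncomputable def catSingle {G : Type*} [Category G] {A : G → Type*} [∀ e, Ring (A e)]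
    (p : CMor G) (a : A p.2.1) : CP A := DFinsupp.single p a


section Aux
variable {G : Type*} [Category G] {A : G → Type*} [∀ e, Ring (A e)]

lemma castRH_rfl (e : G) : castRH A (rfl : e = e) = RingHom.id (A e) := rfl

open Classical in
lemma aux_sum_apply (x : CP A) (C : CMor G → Prop)
    (g : ∀ p : CMor G, A p.2.1 → C p → A p.2.1)
    (hg : ∀ p h, g p 0 h = 0) (r : CMor G) :
    (x.sum fun p xp => if h : C p then DFinsupp.single p (g p xp h) else 0) r
      = if h : C r then g r (x r) h else 0 := by
  classical
  rw [DFinsupp.sum_apply]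
  unfold DFinsupp.sum
  rw [Finset.sum_eq_single r]
  · by_cases h : C r <;> simp [h]
  · intro p _ hpr
    dsimp only
    by_cases h : C p
    · simp only [h, dif_pos]
      exact DFinsupp.single_eq_of_ne (Ne.symm hpr)
    · simp [h]
  · intro hr
    dsimp only
    rw [DFinsupp.notMem_support_iff.mp hr]
    by_cases h : C r
    · simp [h, hg]
    · simp [h]

variable (σ : ∀ e f : G, (e ⟶ f) → (A e →+* A f))
    (α : ∀ e f g : G, (f ⟶ g) → (e ⟶ f) → A g)

open Classical in
lemma catMul_single_right
    (hα1r : ∀ (e f : G) (s : e ⟶ f), α e e f s (𝟙 e) = 1)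
    (x : CP A) (e : G) (a : A e) (r : CMor G) :
    catMul σ α x (catSingle (A := A) ⟨e, e, 𝟙 e⟩ a) r
      = if h : e = r.1 then x r * σ r.1 r.2.1 r.2.2 (castRH A h a) else 0 := by
  classical
  unfold catMul catSingle
  have key : ∀ (p : CMor G) (a' : A p.2.1),
      ((DFinsupp.single (⟨e, e, 𝟙 e⟩ : CMor G) a).sum fun q b =>
        if h : q.2.1 = p.1 then
          DFinsupp.single (⟨q.1, p.2.1, (q.2.2 ≫ eqToHom h) ≫ p.2.2⟩ : CMor G)
            (a' * σ p.1 p.2.1 p.2.2 (castRH A h b) * α q.1 p.1 p.2.1 p.2.2 (q.2.2 ≫ eqToHom h))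
        else (0 : CP A))
      = if h : e = p.1 then DFinsupp.single p (a' * σ p.1 p.2.1 p.2.2 (castRH A h a)) else 0 := by
    rintro ⟨pd, pc, ps⟩ a'
    rw [DFinsupp.sum_single_index]
    · dsimp only
      split_ifs with h
      · subst h
        simp only [Category.id_comp, Category.comp_id, hα1r, castRH_rfl, eqToHom_refl, RingHom.id_apply, mul_one]
        rw [show (𝟙 e ≫ 𝟙 e) ≫ ps = ps by simp]
      · rfl
    · dsimp only
      split_ifs with h
      · subst h
        simp
      · rfl
  simp only [key]
  exact aux_sum_apply x (fun p => e = p.1)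
    (fun p xp h => xp * σ p.1 p.2.1 p.2.2 (castRH A h a)) (fun p h => zero_mul _) r

open Classical in
lemma catMul_single_left
    (hσ1 : ∀ e : G, σ e e (𝟙 e) = RingHom.id (A e))
    (hα1l : ∀ (e f : G) (s : e ⟶ f), α e f f (𝟙 f) s = 1)
    (x : CP A) (e : G) (a : A e) (r : CMor G) :
    catMul σ α (catSingle (A := A) ⟨e, e, 𝟙 e⟩ a) x r
      = if h : r.2.1 = e then castRH A h.symm a * x r else 0 := by
  classical
  unfold catMul catSingle
  rw [DFinsupp.sum_single_index]
  · have key : ∀ (q : CMor G) (b : A q.2.1),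
        (if h : q.2.1 = (⟨e, e, 𝟙 e⟩ : CMor G).1 then
          DFinsupp.single (⟨q.1, (⟨e, e, 𝟙 e⟩ : CMor G).2.1, (q.2.2 ≫ eqToHom h) ≫ (⟨e, e, 𝟙 e⟩ : CMor G).2.2⟩ : CMor G)
            (a * σ _ _ (⟨e, e, 𝟙 e⟩ : CMor G).2.2 (castRH A h b) * α q.1 _ _ (⟨e, e, 𝟙 e⟩ : CMor G).2.2 (q.2.2 ≫ eqToHom h))
        else (0 : CP A))
        = if h : q.2.1 = e then DFinsupp.single q (castRH A h.symm a * b) else 0 := by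
      rintro ⟨qd, qc, qs⟩ b
      dsimp only
      split_ifs with h
      · subst h
        simp only [hσ1, hα1l, castRH_rfl, eqToHom_refl, RingHom.id_apply, mul_one, Category.comp_id]
        rw [show (qs ≫ 𝟙 qc) ≫ 𝟙 qc = qs by simp]
      · rfl
    simp only [key]
    exact aux_sum_apply x (fun q => q.2.1 = e)
      (fun q b h => castRH A h.symm a * b) (fun q h => mul_zero _) r
  · refine DFinsupp.ext fun r' => ?_
    rw [DFinsupp.sum_apply]
    apply DFinsupp.sum_eq_zero
    intro q
    dsimp only
    split_ifs with h
    · simp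
    · rfl

end Aux

/-- if each `A_e` is an integral domain, then the commutant of the
coefficient ring `A` in `A ⋊_α^σ G` consists exactly of the elements whose
coefficient vanishes at every morphism `s` for which `σ_s` is not an identity
map; consequently `A` is maximal commutative iff `σ_s` is not an identity map
for every nonidentity morphism `s`. -/
theorem commutant_integral_domains
    {G : Type*} [CategoryTheory.Category G] {A : G → Type*}
    [∀ e, CommRing (A e)] [∀ e, IsDomain (A e)]
    (σ : ∀ e f : G, (e ⟶ f) → (A e →+* A f))
    (α : ∀ e f g : G, (f ⟶ g) → (e ⟶ f) → A g)
    (hσ1 : ∀ e : G, σ e e (𝟙 e) = RingHom.id (A e))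
    (hα1r : ∀ (e f : G) (s : e ⟶ f), α e e f s (𝟙 e) = 1)
    (hα1l : ∀ (e f : G) (s : e ⟶ f), α e f f (𝟙 f) s = 1)
    (hcoc : ∀ (e f g h : G) (s : g ⟶ h) (t : f ⟶ g) (r : e ⟶ f),
      α f g h s t * α e f h (t ≫ s) r = σ g h s (α e f g t r) * α e g h s (r ≫ t))
    (htw : ∀ (e f g : G) (s : f ⟶ g) (t : e ⟶ f) (a : A e),
      σ f g s (σ e f t a) * α e f g s t = α e f g s t * σ e g (t ≫ s) a) :
    (∀ x : CP A,
      (∀ (e : G) (a : A e),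
          catMul σ α x (catSingle (A := A) ⟨e, e, 𝟙 e⟩ a)
            = catMul σ α (catSingle (A := A) ⟨e, e, 𝟙 e⟩ a) x) ↔
        ∀ p : CMor G,
          ¬ (∃ h : p.1 = p.2.1, σ p.1 p.2.1 p.2.2 = castRH A h) → x p = 0) ∧
    ((∀ x : CP A,
        (∀ (e : G) (a : A e),
          catMul σ α x (catSingle (A := A) ⟨e, e, 𝟙 e⟩ a)
            = catMul σ α (catSingle (A := A) ⟨e, e, 𝟙 e⟩ a) x) →
        ∀ p : CMor G, (∀ e : G, p ≠ ⟨e, e, 𝟙 e⟩) → x p = 0) ↔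
      (∀ p : CMor G, (∀ e : G, p ≠ ⟨e, e, 𝟙 e⟩) →
        ¬ ∃ h : p.1 = p.2.1, σ p.1 p.2.1 p.2.2 = castRH A h)) := by
  
  classical
  have Hiff : ∀ x : CP A,
      (∀ (e : G) (a : A e),
          catMul σ α x (catSingle (A := A) ⟨e, e, 𝟙 e⟩ a)
            = catMul σ α (catSingle (A := A) ⟨e, e, 𝟙 e⟩ a) x) ↔
        ∀ p : CMor G,
          ¬ (∃ h : p.1 = p.2.1, σ p.1 p.2.1 p.2.2 = castRH A h) → x p = 0 := by
    intro x
    constructor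
    · intro hcomm
      rintro ⟨d, c, s⟩ hp
      dsimp only at hp ⊢
      by_cases hdc : c = d
      · subst hdc
        by_contra hx0
        have hid : ∀ a : A c, σ c c s a = a := by
          intro a
          have h1 := DFunLike.congr_fun (hcomm c a) (⟨c, c, s⟩ : CMor G)
          rw [catMul_single_right σ α hα1r, catMul_single_left σ α hσ1 hα1l] at h1
          dsimp only at h1
          rw [dif_pos rfl, dif_pos rfl] at h1
          simp only [castRH_rfl, RingHom.id_apply] at h1
          have h2 : x ⟨c, c, s⟩ * σ c c s a = x ⟨c, c, s⟩ * a := by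
            rw [h1]; exact mul_comm _ _
          exact mul_left_cancel₀ hx0 h2
        exact hp ⟨rfl, by rw [castRH_rfl]; exact RingHom.ext hid⟩
      · have h1 := DFunLike.congr_fun (hcomm d 1) (⟨d, c, s⟩ : CMor G)
        rw [catMul_single_right σ α hα1r, catMul_single_left σ α hσ1 hα1l] at h1
        dsimp only at h1
        rw [dif_pos rfl, dif_neg hdc] at h1
        simpa only [castRH_rfl, RingHom.id_apply, map_one, mul_one] using h1
    · intro hx e a
      ext r
      rw [catMul_single_right σ α hα1r, catMul_single_left σ α hσ1 hα1l]
      by_cases hxr : x r = 0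
      · rw [hxr]
        split_ifs <;> simp
      · have hid : ∃ h : r.1 = r.2.1, σ r.1 r.2.1 r.2.2 = castRH A h := by
          by_contra hc; exact hxr (hx r hc)
        obtain ⟨d, c, s⟩ := r
        obtain ⟨h1, h2⟩ := hid
        dsimp only at h1 h2 hxr ⊢
        subst h1
        by_cases he : e = d
        · subst he
          rw [dif_pos rfl, dif_pos rfl, h2]
          simp only [castRH_rfl, RingHom.id_apply]
          exact mul_comm _ _
        · rw [dif_neg he, dif_neg (fun hh => he hh.symm)]
  refine ⟨Hiff, ?_, ?_⟩
  · intro H p hpnid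
    rintro ⟨hpe, hpid⟩
    have hcomm := (Hiff (catSingle (A := A) p 1)).mpr ?_
    · have h0 := H _ hcomm p hpnid
      rw [catSingle, DFinsupp.single_eq_same] at h0
      exact one_ne_zero h0
    · intro q hq
      by_cases h : p = q
      · subst h
        exact absurd ⟨hpe, hpid⟩ hq
      · rw [catSingle]
        exact DFinsupp.single_eq_of_ne (Ne.symm h)
  · intro H x hxcomm p hpnid
    exact (Hiff x).mp hxcomm p (H p hpnid)
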